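/- Suppose n, k ∈ ℕ and H is a coloured graph containing a blue path P = u0 u1 ⋯ u_{k+1} such that u0u_{k+1} is not an edge of H or is a red edge of H, no edge of N_H({u1,…,uk}) outside E(P) is blue, and |N_H({u1,…,uk})| + δ_H(u0,u_{k+1}) ≤ 2k + 1. Let H' be the graph obtained from H by contraction of the path P to the edge u0u_{k+1}. If Builder has a winning strategy in RR(C4, P_{n−k}, H'), then Builder has a winning strategy in RR(C4, Pn, H). -/

import Mathlib

/-!
The game `RR(C₄, Pₙ, H)`: the board is `K_ℕ` on which a coloured graph `H`
(with red edge set `R₀` and blue edge set `B₀`) is initially placed.  In each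
round Builder selects a previously uncoloured edge and Painter colours it red
(`true`) or blue (`false`), except that Painter may never colour an edge red
if the red edges would then contain a `C₄`.  Builder wins if `e(H) ≤ 2n - 2`
and after at most `2n - 2 - e(H)` rounds the blue edges number exactly `n - 1`
and contain a path on `n` vertices.
-/

namespace OnlineRamsey

abbrev Edge := Sym2 ℕ
abbrev History := List (Edge × Bool)   -- `true` = red, `false` = blue
abbrev BuilderStrat := History → Edge
abbrev PainterStrat := History → Edge → Bool

/-- The history of coloured edges after `t` rounds (not counting the initial
coloured graph), when Builder follows `B` and Painter follows `P`. -/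
def gamePlay (B : BuilderStrat) (P : PainterStrat) : ℕ → History
  | 0 => []
  | t + 1 =>
      let h := gamePlay B P t
      h ++ [(B h, P h (B h))]

/-- All red edges: the initially placed ones together with those coloured red. -/
def redSet (R₀ : Set Edge) (h : History) : Set Edge := R₀ ∪ {e | (e, true) ∈ h}

/-- All blue edges: the initially placed ones together with those coloured blue. -/
def blueSet (B₀ : Set Edge) (h : History) : Set Edge := B₀ ∪ {e | (e, false) ∈ h}

/-- `H` contains a copy of `G`. -/
def HasCopy {α β : Type} (G : SimpleGraph α) (H : SimpleGraph β) : Prop :=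
  ∃ f : G →g H, Function.Injective f

/-- Painter never colours an edge red if the red edges would then contain a `C₄`. -/
def PainterLegal (R₀ : Set Edge) (P : PainterStrat) : Prop :=
  ∀ (h : History) (e : Edge), P h e = true →
    ¬ HasCopy (SimpleGraph.cycleGraph 4)
        (SimpleGraph.fromEdgeSet (insert e (redSet R₀ h)))

/-- During the first `m` rounds Builder always selects a previously uncoloured
(non-loop) edge. -/
def BuilderLegal (R₀ B₀ : Set Edge) (B : BuilderStrat) (m : ℕ) : Prop :=
  ∀ P : PainterStrat, ∀ t < m,
    ¬ (B (gamePlay B P t)).IsDiag ∧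
      B (gamePlay B P t) ∉ redSet R₀ (gamePlay B P t) ∪ blueSet B₀ (gamePlay B P t)

/-- Builder has a winning strategy in the game `RR(C₄, Pₙ, H)`, where the initial
coloured graph `H` has red edge set `R₀` and blue edge set `B₀`. -/
def RRWin (n : ℕ) (R₀ B₀ : Set Edge) : Prop :=
  (R₀ ∪ B₀).ncard ≤ 2 * n - 2 ∧
  ∃ B : BuilderStrat, BuilderLegal R₀ B₀ B (2 * n - 2 - (R₀ ∪ B₀).ncard) ∧
    ∀ P : PainterStrat, PainterLegal R₀ P →
      ∃ t ≤ 2 * n - 2 - (R₀ ∪ B₀).ncard,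
        (blueSet B₀ (gamePlay B P t)).ncard = n - 1 ∧
        HasCopy (SimpleGraph.pathGraph n)
          (SimpleGraph.fromEdgeSet (blueSet B₀ (gamePlay B P t)))

/-- The internal vertices `u₁, …, u_k` of the path `u₀ u₁ ⋯ u_{k+1}`. -/
def interiorVerts {k : ℕ} (u : Fin (k + 2) → ℕ) : Set ℕ :=
  {v | ∃ i : Fin (k + 2), 1 ≤ (i : ℕ) ∧ (i : ℕ) ≤ k ∧ v = u i}

/-- `N_H(A)`: the set of edges of the coloured graph (with red edges `R` and blue
edges `Bl`) having at least one endpoint in `A`. -/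
def edgeNbhd (R Bl : Set Edge) (A : Set ℕ) : Set Edge :=
  {e | e ∈ R ∪ Bl ∧ ∃ v ∈ A, v ∈ e}

theorem hasCopy_of_map {α : Type} {G : SimpleGraph α} {E E' : Set Edge}
    (φ : ℕ → ℕ) (hφ : Function.Injective φ)
    (hsub : ∀ e ∈ E, Sym2.map φ e ∈ E')
    (h : HasCopy G (SimpleGraph.fromEdgeSet E)) :
    HasCopy G (SimpleGraph.fromEdgeSet E') := by
  obtain ⟨f, hf⟩ := h
  refine ⟨⟨fun a => φ (f a), ?_⟩, fun a b hab => hf (hφ hab)⟩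
  intro a b hab
  have h2 := f.map_adj hab
  rw [SimpleGraph.fromEdgeSet_adj] at h2 ⊢
  refine ⟨by simpa [Sym2.map_pair_eq] using hsub _ h2.1, fun hc => h2.2 (hφ hc)⟩

theorem exists_fresh_edge {S : Set Edge} (hS : S.Finite) :
    ∃ e : Edge, ¬ e.IsDiag ∧ e ∉ S := by
  by_contra h
  push_neg at h
  have hinj : Function.Injective (fun m : ℕ => (s(m, m + 1) : Edge)) := by
    intro a b hab
    simp only [Sym2.eq, Sym2.rel_iff', Prod.mk.injEq, Prod.swap_prod_mk] at hab
    omega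
  have : S.Infinite := Set.infinite_of_injective_forall_mem hinj
    (fun m => h _ (by simp [Sym2.mk_isDiag_iff]))
  exact this hS

theorem hasCopy_path_of_seq {m : ℕ} {E : Set Edge} (g : ℕ → ℕ)
    (hinj : ∀ i1, i1 < m → ∀ i2, i2 < m → g i1 = g i2 → i1 = i2)
    (hedge : ∀ i, i + 1 < m → s(g i, g (i + 1)) ∈ E) :
    HasCopy (SimpleGraph.pathGraph m) (SimpleGraph.fromEdgeSet E) := by
  refine ⟨⟨fun i => g i.val, ?_⟩, ?_⟩
  · intro a b hab
    rw [SimpleGraph.pathGraph_adj] at hab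
    rw [SimpleGraph.fromEdgeSet_adj]
    have hne : g a.val ≠ g b.val := by
      intro hc
      have := hinj a.val a.isLt b.val b.isLt hc
      omega
    rcases hab with h | h
    · refine ⟨?_, hne⟩
      have := hedge a.val (h ▸ b.isLt)
      simpa [h] using this
    · refine ⟨?_, hne⟩
      have := hedge b.val (h ▸ a.isLt)
      rw [Sym2.eq_swap]
      simpa [h] using this
  · intro a b hab
    exact Fin.ext (hinj a.val a.isLt b.val b.isLt hab)

theorem path_structure {m : ℕ} {E : Set Edge} (hE : E.Finite)
    (hcard : E.ncard = m - 1) (hm : 2 ≤ m)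
    (h : HasCopy (SimpleGraph.pathGraph m) (SimpleGraph.fromEdgeSet E)) :
    ∃ c : ℕ → ℕ, (∀ i1, i1 < m → ∀ i2, i2 < m → c i1 = c i2 → i1 = i2) ∧
      (∀ i, i + 1 < m → s(c i, c (i + 1)) ∈ E) ∧
      (∀ e ∈ E, ∃ i, i + 1 < m ∧ e = s(c i, c (i + 1))) := by
  obtain ⟨f, hf⟩ := h
  set c : ℕ → ℕ := fun i => if h : i < m then f ⟨i, h⟩ else 0 with hc
  have hcinj : ∀ i1, i1 < m → ∀ i2, i2 < m → c i1 = c i2 → i1 = i2 := by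
    intro i hi j hj hij
    simp only [hc, dif_pos hi, dif_pos hj] at hij
    have := congrArg Fin.val (hf hij)
    simpa using this
  have hcedge : ∀ i, i + 1 < m → s(c i, c (i + 1)) ∈ E := by
    intro i hi
    have hi' : i < m := by omega
    have hadj : (SimpleGraph.pathGraph m).Adj ⟨i, hi'⟩ ⟨i + 1, hi⟩ := by
      rw [SimpleGraph.pathGraph_adj]; left; rfl
    have := f.map_adj hadj
    rw [SimpleGraph.fromEdgeSet_adj] at this
    simpa only [hc, dif_pos hi', dif_pos hi] using this.1
  refine ⟨c, hcinj, hcedge, ?_⟩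
  set T : Set Edge := (fun i => s(c i, c (i + 1))) '' {i | i + 1 < m} with hT
  have hTsub : T ⊆ E := by
    rintro e ⟨i, hi, rfl⟩
    exact hcedge i hi
  have hedgeinj : Set.InjOn (fun i => s(c i, c (i + 1))) {i | i + 1 < m} := by
    intro i hi j hj hij
    simp only [Set.mem_setOf_eq] at hi hj
    rcases Sym2.eq_iff.mp hij with ⟨h1, h2⟩ | ⟨h1, h2⟩
    · exact hcinj i (by omega) j (by omega) h1
    · have e1 := hcinj i (by omega) (j + 1) hj h1
      have e2 := hcinj (i + 1) hi j (by omega) h2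
      omega
  have hTcard : T.ncard = m - 1 := by
    rw [hT, Set.ncard_image_of_injOn hedgeinj]
    have : {i | i + 1 < m} = ↑(Finset.range (m - 1)) := by
      ext i; simp; omega
    rw [this, Set.ncard_coe_finset, Finset.card_range]
  have hTE : T = E := Set.eq_of_subset_of_ncard_le hTsub (by omega) hE
  intro e he
  rw [← hTE] at he
  obtain ⟨i, hi, hie⟩ := he
  exact ⟨i, hi, hie.symm⟩

theorem gamePlay_length (B : BuilderStrat) (P : PainterStrat) (t : ℕ) :
    (gamePlay B P t).length = t := by
  induction t with
  | zero => rfl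
  | succ t ih => simp [gamePlay, ih]

theorem mem_history_colored {R₀ B₀ : Set Edge} {h : History} {e : Edge} {c : Bool}
    (hm : (e, c) ∈ h) : e ∈ redSet R₀ h ∪ blueSet B₀ h := by
  cases c
  · exact Or.inr (Or.inr hm)
  · exact Or.inl (Or.inr hm)

theorem mem_gamePlay_not_initial {R₀ B₀ : Set Edge} {B : BuilderStrat} {m : ℕ}
    (hB : BuilderLegal R₀ B₀ B m) (P : PainterStrat) :
    ∀ t, t ≤ m → ∀ e c, (e, c) ∈ gamePlay B P t → e ∉ R₀ ∪ B₀ := by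
  intro t
  induction t with
  | zero => intro _ e c h; simp [gamePlay] at h
  | succ t ih =>
    intro ht e c h
    rw [gamePlay] at h
    simp only [List.mem_append, List.mem_singleton] at h
    rcases h with h | h
    · exact ih (by omega) e c h
    · have h2 := (hB P t (by omega)).2
      have he : e = B (gamePlay B P t) := congrArg Prod.fst h
      intro hmem
      subst he
      rcases hmem with hmem | hmem
      · exact h2 (Or.inl (Or.inl hmem))
      · exact h2 (Or.inr (Or.inl hmem))

open scoped Classical in
/-- The contraction lemma: if `H` contains a blue path `P = u₀u₁⋯u_{k+1}` whose
ends are non-adjacent or joined by a red edge, no edge of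
`N_H({u₁,…,u_k}) ∖ E(P)` is blue, and
`|N_H({u₁,…,u_k})| + δ_H(u₀,u_{k+1}) ≤ 2k + 1`, then a winning strategy for
Builder in `RR(C₄, P_{n-k}, H')`, where `H'` is obtained from `H` by contracting
`P` to the (blue) edge `u₀u_{k+1}`, yields a winning strategy for Builder in
`RR(C₄, Pₙ, H)`. -/
theorem RR_win_of_contraction (n k : ℕ) (R Bl : Set Edge)
    (hRfin : R.Finite) (hBlfin : Bl.Finite) (hdisj : Disjoint R Bl)
    (hloop : ∀ e ∈ R ∪ Bl, ¬ e.IsDiag)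
    (u : Fin (k + 2) → ℕ) (hu : Function.Injective u)
    (hblue : ∀ i : Fin (k + 1), s(u i.castSucc, u i.succ) ∈ Bl)
    (hend : s(u 0, u (Fin.last (k + 1))) ∉ R ∪ Bl ∨
      s(u 0, u (Fin.last (k + 1))) ∈ R)
    (hNnotblue : ∀ e ∈ Bl, e ∈ edgeNbhd R Bl (interiorVerts u) →
      ∃ i : Fin (k + 1), e = s(u i.castSucc, u i.succ))
    (hcount : (edgeNbhd R Bl (interiorVerts u)).ncard +
        (if s(u 0, u (Fin.last (k + 1))) ∈ R ∪ Bl then 1 else 0) ≤ 2 * k + 1)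
    (hwin' : RRWin (n - k)
      (R \ (edgeNbhd R Bl (interiorVerts u) ∪ {s(u 0, u (Fin.last (k + 1)))}))
      ((Bl \ edgeNbhd R Bl (interiorVerts u)) ∪ {s(u 0, u (Fin.last (k + 1)))})) :
    RRWin n R Bl := by
  classical
  set e₀ : Edge := s(u 0, u (Fin.last (k + 1))) with he₀def
  set N : Set Edge := edgeNbhd R Bl (interiorVerts u) with hNdef
  set R' : Set Edge := R \ (N ∪ {e₀}) with hR'def
  set Bl' : Set Edge := (Bl \ N) ∪ {e₀} with hBl'def
  obtain ⟨ha, B', hBL', hWin'⟩ := hwin'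
  -- basic finiteness
  have hNsub : N ⊆ R ∪ Bl := fun e he => he.1
  have hRBfin : (R ∪ Bl).Finite := hRfin.union hBlfin
  have hR'fin : R'.Finite := hRfin.subset Set.diff_subset
  have hBl'fin : Bl'.Finite := (hBlfin.subset Set.diff_subset).union (Set.finite_singleton e₀)
  have hR'Bl'fin : (R' ∪ Bl').Finite := hR'fin.union hBl'fin
  -- endpoints of the path are not interior
  have hu0not : u 0 ∉ interiorVerts u := by
    rintro ⟨i, h1, h2, h3⟩
    have := congrArg Fin.val (hu h3)
    simp at this
    omega
  have hulnot : u (Fin.last (k + 1)) ∉ interiorVerts u := by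
    rintro ⟨i, h1, h2, h3⟩
    have := congrArg Fin.val (hu h3)
    simp [Fin.last] at this
    omega
  have he₀N : e₀ ∉ N := by
    rintro ⟨-, v, hv, hve⟩
    rcases Sym2.mem_iff.mp hve with rfl | rfl
    · exact hu0not hv
    · exact hulnot hv
  have hk1 : 1 ≤ k := by
    by_contra hk
    have hk0 : k = 0 := by omega
    subst hk0
    have h0 := hblue 0
    have e1 : (0 : Fin 2) = Fin.castSucc (0 : Fin 1) := by decide
    have e2 : Fin.last 1 = Fin.succ (0 : Fin 1) := by decide
    have hBl0 : e₀ ∈ Bl := by rw [he₀def, e1, e2]; exact h0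
    rcases hend with hend | hend
    · exact hend (Or.inr hBl0)
    · exact Set.disjoint_left.mp hdisj hend hBl0
  have he₀Bl : e₀ ∉ Bl := by
    rcases hend with hend | hend
    · exact fun h => hend (Or.inr h)
    · exact Set.disjoint_left.mp hdisj hend
  -- the path edges
  set pathE : Set Edge := {e | ∃ i : Fin (k + 1), e = s(u i.castSucc, u i.succ)} with hpathEdef
  have hpathBl : pathE ⊆ Bl := by rintro e ⟨i, rfl⟩; exact hblue i
  have hpathInt : ∀ e ∈ pathE, ∃ v ∈ interiorVerts u, v ∈ e := by
    rintro e ⟨i, rfl⟩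
    by_cases hik : (i : ℕ) < k
    · refine ⟨u i.succ, ⟨i.succ, ?_, ?_, rfl⟩, Sym2.mem_mk_right _ _⟩
      · simp [Fin.val_succ]
      · simp [Fin.val_succ]; omega
    · have hik' : (i : ℕ) = k := by omega
      refine ⟨u i.castSucc, ⟨i.castSucc, ?_, ?_, rfl⟩, Sym2.mem_mk_left _ _⟩
      · simp [Fin.coe_castSucc]; omega
      · simp [Fin.coe_castSucc]; omega
  have hpathN : pathE ⊆ N := fun e he => ⟨Or.inr (hpathBl he), hpathInt e he⟩
  have hpinj : Function.Injective (fun i : Fin (k + 1) => (s(u i.castSucc, u i.succ) : Edge)) := by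
    intro i j hij
    rcases Sym2.eq_iff.mp hij with ⟨h1, h2⟩ | ⟨h1, h2⟩
    · exact Fin.castSucc_injective _ (hu h1)
    · have e1 := congrArg Fin.val (hu h1)
      have e2 := congrArg Fin.val (hu h2)
      simp [Fin.val_succ, Fin.coe_castSucc] at e1 e2
      exfalso
      omega
  have hpathEcard : pathE.ncard = k + 1 := by
    have hre : pathE = Set.range (fun i : Fin (k + 1) => (s(u i.castSucc, u i.succ) : Edge)) := by
      ext e
      simp only [hpathEdef, Set.mem_setOf_eq, Set.mem_range]
      exact ⟨fun ⟨i, hi⟩ => ⟨i, hi.symm⟩, fun ⟨i, hi⟩ => ⟨i, hi.symm⟩⟩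
    rw [hre, ← Set.image_univ, Set.ncard_image_of_injective _ hpinj, Set.ncard_univ,
      Nat.card_eq_fintype_card, Fintype.card_fin]
  -- counting
  have hpathEfin : pathE.Finite := hBlfin.subset hpathBl
  have hmain : (R ∪ Bl).ncard + 1 =
      (R' ∪ Bl').ncard + N.ncard + (if e₀ ∈ R ∪ Bl then 1 else 0) := by
    set D0 : Set Edge := (R ∪ Bl) \ (N ∪ {e₀}) with hD0def
    have hD0fin : D0.Finite := hRBfin.subset Set.diff_subset
    have hclaim1 : R' ∪ Bl' = D0 ∪ {e₀} := by
      ext e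
      simp only [hR'def, hBl'def, hD0def, Set.mem_union, Set.mem_diff, Set.mem_singleton_iff]
      by_cases hee : e = e₀
      · subst hee
        simp [he₀N, he₀Bl]
      · constructor
        · rintro (⟨h1, h2⟩ | (⟨h1, h2⟩ | h1))
          · exact Or.inl ⟨Or.inl h1, fun hc => h2 hc⟩
          · exact Or.inl ⟨Or.inr h1, fun hc => hc.elim h2 hee⟩
          · exact Or.inr h1
        · rintro (⟨h1, h2⟩ | h1)
          · rcases h1 with h1 | h1
            · exact Or.inl ⟨h1, h2⟩
            · exact Or.inr (Or.inl ⟨h1, fun hc => h2 (Or.inl hc)⟩)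
          · exact Or.inr (Or.inr h1)
    have he₀D0 : e₀ ∉ D0 := fun hc => hc.2 (Or.inr rfl)
    have hcard1 : (R' ∪ Bl').ncard = D0.ncard + 1 := by
      rw [hclaim1, Set.union_singleton, Set.ncard_insert_of_notMem he₀D0 hD0fin]
    have hclaim2 : R ∪ Bl = D0 ∪ N ∪ ((R ∪ Bl) ∩ {e₀}) := by
      ext e
      simp only [hD0def, Set.mem_union, Set.mem_diff, Set.mem_inter_iff, Set.mem_singleton_iff]
      constructor
      · intro h
        by_cases hN : e ∈ N
        · exact Or.inl (Or.inr hN)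
        · by_cases hee : e = e₀
          · exact Or.inr ⟨h, hee⟩
          · exact Or.inl (Or.inl ⟨h, fun hc => hc.elim hN hee⟩)
      · rintro ((⟨h, -⟩ | h) | ⟨h, -⟩)
        · exact h
        · exact hNsub h
        · exact h
    have hdis1 : Disjoint (D0 ∪ N) ((R ∪ Bl) ∩ {e₀}) := by
      rw [Set.disjoint_right]
      rintro e ⟨-, he⟩
      rw [Set.mem_singleton_iff] at he
      subst he
      rintro (hc | hc)
      · exact hc.2 (Or.inr rfl)
      · exact he₀N hc
    have hdis2 : Disjoint D0 N := by
      rw [Set.disjoint_left]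
      rintro e he hc
      exact he.2 (Or.inl hc)
    have hNfin : N.Finite := hRBfin.subset hNsub
    have hcard2 : (R ∪ Bl).ncard = D0.ncard + N.ncard + ((R ∪ Bl) ∩ {e₀}).ncard := by
      conv_lhs => rw [hclaim2]
      rw [Set.ncard_union_eq hdis1 (hD0fin.union hNfin)
        (hRBfin.inter_of_left _), Set.ncard_union_eq hdis2 hD0fin hNfin]
    have hcard3 : ((R ∪ Bl) ∩ {e₀}).ncard = (if e₀ ∈ R ∪ Bl then 1 else 0) := by
      by_cases h₀ : e₀ ∈ R ∪ Bl
      · rw [if_pos h₀]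
        have : (R ∪ Bl) ∩ {e₀} = {e₀} := by
          ext x
          simp only [Set.mem_inter_iff, Set.mem_singleton_iff]
          exact ⟨fun h => h.2, fun h => ⟨h ▸ h₀, h⟩⟩
        rw [this, Set.ncard_singleton]
      · rw [if_neg h₀]
        have : (R ∪ Bl) ∩ {e₀} = ∅ := by
          ext x
          simp only [Set.mem_inter_iff, Set.mem_singleton_iff, Set.mem_empty_iff_false,
            iff_false, not_and]
          rintro hx rfl
          exact h₀ hx
        rw [this, Set.ncard_empty]
    rw [hcard2, hcard1, hcard3]
    ring
  have ha1 : 1 ≤ (R' ∪ Bl').ncard :=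
    (Set.ncard_pos hR'Bl'fin).mpr ⟨e₀, Or.inr (Or.inr rfl)⟩
  have hnk : k + 1 ≤ n := by
    by_contra hc
    have h0 : 2 * (n - k) - 2 = 0 := by omega
    rw [h0] at ha
    omega
  have harith1 : (R ∪ Bl).ncard ≤ 2 * n - 2 := by
    by_cases h₀ : e₀ ∈ R ∪ Bl
    · rw [if_pos h₀] at hmain hcount; omega
    · rw [if_neg h₀] at hmain hcount; omega
  have harith2 : 2 * (n - k) - 2 - (R' ∪ Bl').ncard ≤ 2 * n - 2 - (R ∪ Bl).ncard := by
    by_cases h₀ : e₀ ∈ R ∪ Bl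
    · rw [if_pos h₀] at hmain hcount; omega
    · rw [if_neg h₀] at hmain hcount; omega
  -- vertex sets
  have hmemfin : ∀ e : Edge, {v | v ∈ e}.Finite := by
    intro e
    induction e using Sym2.ind with
    | _ a b =>
      have : {v | v ∈ (s(a, b) : Edge)} = {a, b} := by
        ext v; simp [Sym2.mem_iff]
      rw [this]
      exact (Set.finite_singleton b).insert a
  set VAll : Set ℕ := {v | ∃ e ∈ R ∪ Bl, v ∈ e} with hVAlldef
  have hVAllfin : VAll.Finite := by
    have hsub : VAll ⊆ ⋃ e ∈ R ∪ Bl, {v | v ∈ e} := by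
      rintro v ⟨e, he, hv⟩
      exact Set.mem_biUnion he hv
    exact (Set.Finite.biUnion hRBfin fun e _ => hmemfin e).subset hsub
  obtain ⟨M, hM⟩ : ∃ M : ℕ, ∀ v ∈ VAll, v < M := by
    obtain ⟨b, hb⟩ := hVAllfin.bddAbove
    exact ⟨b + 1, fun v hv => Nat.lt_succ_of_le (hb hv)⟩
  set V0 : Set ℕ := {v | ∃ e ∈ R' ∪ Bl', v ∈ e} with hV0def
  have h00 : Fin.castSucc (0 : Fin (k + 1)) = (0 : Fin (k + 2)) := by
    ext; simp
  have hll : Fin.succ (Fin.last k) = Fin.last (k + 1) := by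
    ext; simp [Fin.val_succ]
  have hu0VAll : u 0 ∈ VAll := by
    refine ⟨s(u (Fin.castSucc (0 : Fin (k + 1))), u (Fin.succ (0 : Fin (k + 1)))),
      Or.inr (hblue 0), ?_⟩
    rw [h00]
    exact Sym2.mem_mk_left _ _
  have hulVAll : u (Fin.last (k + 1)) ∈ VAll := by
    refine ⟨s(u (Fin.castSucc (Fin.last k)), u (Fin.succ (Fin.last k))),
      Or.inr (hblue (Fin.last k)), ?_⟩
    rw [hll]
    exact Sym2.mem_mk_right _ _
  have hV0sub : V0 ⊆ VAll := by
    rintro v ⟨e, he, hv⟩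
    rcases he with he | he
    · exact ⟨e, Or.inl he.1, hv⟩
    · rcases he with he | he
      · exact ⟨e, Or.inr he.1, hv⟩
      · rw [Set.mem_singleton_iff] at he
        subst he
        rcases Sym2.mem_iff.mp hv with rfl | rfl
        · exact hu0VAll
        · exact hulVAll
  have hintV0 : ∀ v ∈ interiorVerts u, v ∉ V0 := by
    rintro v hint ⟨e, he, hv⟩
    rcases he with he | he
    · exact he.2 (Or.inl ⟨Or.inl he.1, v, hint, hv⟩)
    · rcases he with he | he
      · exact he.2 ⟨Or.inr he.1, v, hint, hv⟩
      · rw [Set.mem_singleton_iff] at he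
        subst he
        rcases Sym2.mem_iff.mp hv with rfl | rfl
        · exact hu0not hint
        · exact hulnot hint
  have hu0V0 : u 0 ∈ V0 := ⟨e₀, Or.inr (Or.inr rfl), Sym2.mem_mk_left _ _⟩
  have hulV0 : u (Fin.last (k + 1)) ∈ V0 := ⟨e₀, Or.inr (Or.inr rfl), Sym2.mem_mk_right _ _⟩
  have hintVAll : ∀ v ∈ interiorVerts u, v ∈ VAll := by
    rintro v ⟨i, h1, h2, rfl⟩
    have hj : (i : ℕ) - 1 < k + 1 := by omega
    refine ⟨s(u (Fin.castSucc ⟨(i : ℕ) - 1, hj⟩), u (Fin.succ ⟨(i : ℕ) - 1, hj⟩)),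
      Or.inr (hblue _), ?_⟩
    have hsj : Fin.succ (⟨(i : ℕ) - 1, hj⟩ : Fin (k + 1)) = i := by
      ext; simp [Fin.val_succ]; omega
    rw [hsj]
    exact Sym2.mem_mk_right _ _
  -- the injection ψ and its left inverse ρ
  set ψ : ℕ → ℕ := fun v => if v ∈ V0 then v else v + M with hψdef
  set ρ : ℕ → ℕ := fun v => if v ∈ V0 then v else v - M with hρdef
  have hψfix : ∀ v ∈ V0, ψ v = v := by
    intro v hv; simp only [hψdef]; rw [if_pos hv]
  have hψout : ∀ v, v ∉ V0 → ψ v = v + M := by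
    intro v hv; simp only [hψdef]; rw [if_neg hv]
  have hψnotVAll : ∀ v, v ∉ V0 → ψ v ∉ VAll := by
    intro v hv hmem
    have := hM _ hmem
    rw [hψout v hv] at this
    omega
  have hψinj : Function.Injective ψ := by
    intro a b hab
    by_cases haV : a ∈ V0 <;> by_cases hbV : b ∈ V0
    · rwa [hψfix a haV, hψfix b hbV] at hab
    · rw [hψfix a haV, hψout b hbV] at hab
      have := hM a (hV0sub haV)
      omega
    · rw [hψout a haV, hψfix b hbV] at hab
      have := hM b (hV0sub hbV)
      omega
    · rw [hψout a haV, hψout b hbV] at hab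
      omega
  have hρψ : ∀ v, ρ (ψ v) = v := by
    intro v
    by_cases hv : v ∈ V0
    · rw [hψfix v hv]
      simp only [hρdef]
      rw [if_pos hv]
    · rw [hψout v hv]
      have hnot : v + M ∉ V0 := fun hc => by have := hM _ (hV0sub hc); omega
      simp only [hρdef]
      rw [if_neg hnot]
      omega
  have hρψe : ∀ e : Edge, Sym2.map ρ (Sym2.map ψ e) = e := by
    intro e
    induction e using Sym2.ind with
    | _ a b => rw [Sym2.map_pair_eq, Sym2.map_pair_eq, hρψ, hρψ]
  have hψeinj : Function.Injective (Sym2.map ψ) := Sym2.map.injective hψinj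
  have hψefix : ∀ e ∈ R' ∪ Bl', Sym2.map ψ e = e := by
    intro e he
    induction e using Sym2.ind with
    | _ a b =>
      rw [Sym2.map_pair_eq, hψfix a ⟨s(a, b), he, Sym2.mem_mk_left _ _⟩,
        hψfix b ⟨s(a, b), he, Sym2.mem_mk_right _ _⟩]
  have hψe₀ : Sym2.map ψ e₀ = e₀ := hψefix e₀ (Or.inr (Or.inr rfl))
  have hintne : ∀ v ∈ interiorVerts u, ∀ x, ψ x ≠ v := by
    intro v hv x hx
    by_cases hxV : x ∈ V0
    · rw [hψfix x hxV] at hx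
      exact hintV0 v hv (hx ▸ hxV)
    · exact hψnotVAll x hxV (hx ▸ hintVAll v hv)
  have hdiagrefl : ∀ e : Edge, (Sym2.map ψ e).IsDiag → e.IsDiag := by
    intro e
    induction e using Sym2.ind with
    | _ a b =>
      rw [Sym2.map_pair_eq, Sym2.mk_isDiag_iff, Sym2.mk_isDiag_iff]
      exact fun h => hψinj h
  -- key freshness lemma
  have hkey : ∀ e : Edge, e ∉ R' ∪ Bl' → Sym2.map ψ e ∉ R ∪ Bl := by
    intro e he hmem
    induction e using Sym2.ind with
    | _ a b =>
      rw [Sym2.map_pair_eq] at hmem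
      by_cases haV : a ∈ V0
      · by_cases hbV : b ∈ V0
        · rw [hψfix a haV, hψfix b hbV] at hmem
          apply he
          have hnN : (s(a, b) : Edge) ∉ N := by
            rintro ⟨-, v, hvint, hve⟩
            rcases Sym2.mem_iff.mp hve with rfl | rfl
            · exact hintV0 _ hvint haV
            · exact hintV0 _ hvint hbV
          rcases hmem with hR | hBl2
          · by_cases h₀ : (s(a, b) : Edge) = e₀
            · exact Or.inr (Or.inr h₀)
            · exact Or.inl ⟨hR, fun hc => hc.elim hnN h₀⟩
          · exact Or.inr (Or.inl ⟨hBl2, hnN⟩)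
        · exact hψnotVAll b hbV ⟨_, hmem, Sym2.mem_mk_right _ _⟩
      · exact hψnotVAll a haV ⟨_, hmem, Sym2.mem_mk_left _ _⟩
  -- the history translations
  set mapH : History → History := List.map (fun p => (Sym2.map ψ p.1, p.2)) with hmapHdef
  set simOf : History → History := List.map (fun p => (Sym2.map ρ p.1, p.2)) with hsimOfdef
  have hsimOf_mapH : ∀ s : History, simOf (mapH s) = s := by
    intro s
    rw [hsimOfdef, hmapHdef, List.map_map]
    have hcomp : ((fun p : Edge × Bool => (Sym2.map ρ p.1, p.2)) ∘
        fun p : Edge × Bool => (Sym2.map ψ p.1, p.2)) = id := by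
      funext p
      simp [Function.comp, hρψe]
    rw [hcomp, List.map_id]
  -- junk moves for padding
  have hjunk_ex : ∀ h : History, ∃ e : Edge,
      ¬ e.IsDiag ∧ e ∉ R ∪ Bl ∪ {e | ∃ c, (e, c) ∈ h} := by
    intro h
    apply exists_fresh_edge
    refine hRBfin.union ?_
    refine Set.Finite.subset ((h.finite_toSet).image Prod.fst) ?_
    rintro e ⟨c, hc⟩
    exact ⟨(e, c), hc, rfl⟩
  choose junk hjunk1 hjunk2 using hjunk_ex
  set budget' : ℕ := 2 * (n - k) - 2 - (R' ∪ Bl').ncard with hbudget'def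
  set BB : BuilderStrat :=
    fun h => if h.length < budget' then Sym2.map ψ (B' (simOf h)) else junk h with hBBdef
  set Psim : PainterStrat → PainterStrat :=
    fun P s e => P (mapH s) (Sym2.map ψ e) with hPsimdef
  -- game correspondence
  have hcorr : ∀ (P : PainterStrat) (t : ℕ), t ≤ budget' →
      gamePlay BB P t = mapH (gamePlay B' (Psim P) t) := by
    intro P t
    induction t with
    | zero => intro _; rfl
    | succ t ih =>
      intro ht
      have ihh := ih (by omega)
      have hlen : (gamePlay BB P t).length = t := gamePlay_length _ _ _
      have hBBt : BB (gamePlay BB P t) = Sym2.map ψ (B' (gamePlay B' (Psim P) t)) := by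
        simp only [hBBdef]
        rw [if_pos (by rw [hlen]; omega), ihh, hsimOf_mapH]
      show gamePlay BB P t ++ [(BB (gamePlay BB P t), P (gamePlay BB P t) (BB (gamePlay BB P t)))]
        = mapH (gamePlay B' (Psim P) t ++
            [(B' (gamePlay B' (Psim P) t),
              Psim P (gamePlay B' (Psim P) t) (B' (gamePlay B' (Psim P) t)))])
      rw [hBBt, ihh]
      simp only [hmapHdef, List.map_append, List.map_cons, List.map_nil]
      rfl
  -- Builder legality
  have hlegal : BuilderLegal R Bl BB (2 * n - 2 - (R ∪ Bl).ncard) := by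
    intro P t ht
    by_cases htb : t < budget'
    · have hcorrt := hcorr P t (by omega)
      have hlen : (gamePlay BB P t).length = t := gamePlay_length _ _ _
      have hBBt : BB (gamePlay BB P t) = Sym2.map ψ (B' (gamePlay B' (Psim P) t)) := by
        simp only [hBBdef]
        rw [if_pos (by rw [hlen]; omega), hcorrt, hsimOf_mapH]
      obtain ⟨hnd, hnm⟩ := hBL' (Psim P) t htb
      have hBnot : B' (gamePlay B' (Psim P) t) ∉ R' ∪ Bl' := by
        rintro (h | h)
        · exact hnm (Or.inl (Or.inl h))
        · exact hnm (Or.inr (Or.inl h))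
      constructor
      · rw [hBBt]
        intro hdiag
        exact hnd (hdiagrefl _ hdiag)
      · rw [hBBt, hcorrt]
        have hhist : ∀ c : Bool,
            (Sym2.map ψ (B' (gamePlay B' (Psim P) t)), c) ∈ mapH (gamePlay B' (Psim P) t) →
              False := by
          intro c hc
          rw [hmapHdef, List.mem_map] at hc
          obtain ⟨p, hp, hpe⟩ := hc
          have h1 : Sym2.map ψ p.1 = Sym2.map ψ (B' (gamePlay B' (Psim P) t)) :=
            congrArg Prod.fst hpe
          have h3 : p.1 = B' (gamePlay B' (Psim P) t) := hψeinj h1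
          have h4 : (B' (gamePlay B' (Psim P) t), p.2) ∈ gamePlay B' (Psim P) t := by
            rw [← h3]
            exact hp
          exact hnm (mem_history_colored (R₀ := R') (B₀ := Bl') h4)
        rintro ((hm | hm) | (hm | hm))
        · exact hkey _ hBnot (Or.inl hm)
        · exact hhist true hm
        · exact hkey _ hBnot (Or.inr hm)
        · exact hhist false hm
    · have hBBt : BB (gamePlay BB P t) = junk (gamePlay BB P t) := by
        simp only [hBBdef]
        rw [if_neg (by rw [gamePlay_length]; omega)]
      rw [hBBt]
      refine ⟨hjunk1 _, ?_⟩
      rintro ((hm | hm) | (hm | hm))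
      · exact hjunk2 _ (Or.inl (Or.inl hm))
      · exact hjunk2 _ (Or.inr ⟨true, hm⟩)
      · exact hjunk2 _ (Or.inl (Or.inr hm))
      · exact hjunk2 _ (Or.inr ⟨false, hm⟩)
  refine ⟨harith1, BB, hlegal, ?_⟩
  intro P hP
  -- the simulated painter is legal
  have hPsimLegal : PainterLegal R' (Psim P) := by
    intro s e hred
    have hPleg := hP (mapH s) (Sym2.map ψ e) hred
    intro hcopy
    apply hPleg
    apply hasCopy_of_map ψ hψinj ?_ hcopy
    rintro x hx
    rcases hx with rfl | hx
    · exact Set.mem_insert _ _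
    · rcases hx with hx | hx
      · rw [hψefix x (Or.inl hx)]
        exact Set.mem_insert_of_mem _ (Or.inl hx.1)
      · refine Set.mem_insert_of_mem _ (Or.inr ?_)
        rw [hmapHdef]
        exact List.mem_map.mpr ⟨(x, true), hx, rfl⟩
  obtain ⟨t', ht'le, hcard', hcopy'⟩ := hWin' (Psim P) hPsimLegal
  have hreal : gamePlay BB P t' = mapH (gamePlay B' (Psim P) t') := hcorr P t' ht'le
  set s : History := gamePlay B' (Psim P) t' with hsdef
  set SB : Set Edge := blueSet Bl' s with hSBdef
  set sblues : Set Edge := {e : Edge | (e, false) ∈ s} with hsbluesdef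
  have hSBeq : SB = Bl' ∪ sblues := by rw [hSBdef, hsbluesdef]; rfl
  have he₀SB : e₀ ∈ SB := by rw [hSBeq]; exact Or.inl (Or.inr rfl)
  have hsbfin : SB.Finite := by
    rw [hSBeq]
    refine hBl'fin.union (Set.Finite.subset ((s.finite_toSet).image Prod.fst) ?_)
    rintro e he
    exact ⟨(e, false), he, rfl⟩
  have hplayed : ∀ e c, (e, c) ∈ s → e ∉ R' ∪ Bl' :=
    fun e c hc => mem_gamePlay_not_initial hBL' (Psim P) t' ht'le e c hc
  have hm2 : 2 ≤ n - k := by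
    have hpos : 0 < SB.ncard := (Set.ncard_pos hsbfin).mpr ⟨e₀, he₀SB⟩
    omega
  have hkn2 : k + 2 ≤ n := by omega
  -- the real blue set
  have hmapblue : {e : Edge | (e, false) ∈ mapH s} = Sym2.map ψ '' sblues := by
    ext e
    simp only [hmapHdef, Set.mem_setOf_eq, List.mem_map, Set.mem_image, hsbluesdef]
    constructor
    · rintro ⟨p, hp, hpe⟩
      have h2 : p.2 = false := congrArg Prod.snd hpe
      refine ⟨p.1, ?_, congrArg Prod.fst hpe⟩
      show (p.1, false) ∈ s
      rw [← h2]
      exact hp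
    · rintro ⟨x, hx, rfl⟩
      exact ⟨(x, false), hx, rfl⟩
  have he₀sblues : e₀ ∉ sblues := by
    rw [hsbluesdef]
    intro hc
    exact hplayed e₀ false hc (Or.inr (Or.inr rfl))
  have himBl' : Sym2.map ψ '' Bl' = Bl' := by
    ext x
    constructor
    · rintro ⟨y, hy, rfl⟩
      rw [hψefix y (Or.inr hy)]
      exact hy
    · intro hx
      exact ⟨x, hx, hψefix x (Or.inr hx)⟩
  have himSB : Sym2.map ψ '' SB = Bl \ N ∪ {e₀} ∪ Sym2.map ψ '' sblues := by
    rw [hSBeq, Set.image_union, himBl', hBl'def]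
  have he₀im : e₀ ∉ Sym2.map ψ '' sblues := by
    rintro ⟨y, hy, hye⟩
    have hyy : y = e₀ := hψeinj (hye.trans hψe₀.symm)
    exact he₀sblues (hyy ▸ hy)
  have hblueEq : blueSet Bl (mapH s) = pathE ∪ (Sym2.map ψ '' SB \ {e₀}) := by
    have hsplit : Bl = pathE ∪ (Bl \ N) := by
      ext e
      constructor
      · intro he
        by_cases heN : e ∈ N
        · exact Or.inl (hNnotblue e he heN)
        · exact Or.inr ⟨he, heN⟩
      · rintro (he | he)
        · exact hpathBl he
        · exact he.1
    have hrm : Sym2.map ψ '' SB \ {e₀} = Bl \ N ∪ Sym2.map ψ '' sblues := by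
      rw [himSB]
      ext x
      simp only [Set.mem_diff, Set.mem_union, Set.mem_singleton_iff]
      constructor
      · rintro ⟨(h | h) | h, hne⟩
        · exact Or.inl h
        · exact absurd h hne
        · exact Or.inr h
      · rintro (h | h)
        · exact ⟨Or.inl (Or.inl h), fun hc => he₀Bl (hc ▸ h.1)⟩
        · exact ⟨Or.inr h, fun hc => he₀im (hc ▸ h)⟩
    rw [hrm]
    have hlhs : blueSet Bl (mapH s) = Bl ∪ Sym2.map ψ '' sblues := by
      rw [← hmapblue]; rfl
    rw [hlhs]
    conv_lhs => rw [hsplit]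
    rw [Set.union_assoc]
  have hpath_not_im : ∀ (y : Edge) (v : ℕ), v ∈ interiorVerts u → v ∉ Sym2.map ψ y := by
    intro y
    induction y using Sym2.ind with
    | _ a b =>
      intro v hv hve
      rw [Sym2.map_pair_eq] at hve
      rcases Sym2.mem_iff.mp hve with h | h
      · exact hintne v hv a h.symm
      · exact hintne v hv b h.symm
  have hdisjPD : Disjoint pathE (Sym2.map ψ '' SB \ {e₀}) := by
    rw [Set.disjoint_left]
    rintro e he1 ⟨⟨y, hy, rfl⟩, -⟩
    obtain ⟨v, hvint, hve⟩ := hpathInt _ he1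
    exact hpath_not_im y v hvint hve
  have himfin : (Sym2.map ψ '' SB).Finite := hsbfin.image _
  have he₀imSB : e₀ ∈ Sym2.map ψ '' SB := ⟨e₀, he₀SB, hψe₀⟩
  have hcardreal : (blueSet Bl (mapH s)).ncard = n - 1 := by
    rw [hblueEq, Set.ncard_union_eq hdisjPD hpathEfin (himfin.diff), hpathEcard]
    have h1 : (Sym2.map ψ '' SB).ncard = n - k - 1 := by
      rw [Set.ncard_image_of_injective _ hψeinj, hcard']
    rw [Set.ncard_diff_singleton_of_mem he₀imSB, h1]
    omega
  -- extract the simulated blue path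
  obtain ⟨c, hcinj, hcedge, hcsurj⟩ := path_structure hsbfin hcard' hm2 hcopy'
  obtain ⟨j, hj, hje⟩ := hcsurj e₀ he₀SB
  have hje1 : s(u 0, u (Fin.last (k + 1))) = s(c j, c (j + 1)) := by
    rw [← he₀def]; exact hje
  have horient := Sym2.eq_iff.mp hje1
  have hedgene : ∀ i, i + 1 < n - k → i ≠ j → s(c i, c (i + 1)) ≠ e₀ := by
    intro i hi hij hc
    rw [hje] at hc
    rcases Sym2.eq_iff.mp hc with ⟨h1, h2⟩ | ⟨h1, h2⟩
    · exact hij (hcinj i (by omega) j (by omega) h1)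
    · have e1 := hcinj i (by omega) (j + 1) (by omega) h1
      have e2 := hcinj (i + 1) (by omega) j (by omega) h2
      omega
  have hDsub : ∀ i, i + 1 < n - k → i ≠ j →
      s(ψ (c i), ψ (c (i + 1))) ∈ blueSet Bl (mapH s) := by
    intro i hi hij
    rw [hblueEq]
    refine Or.inr ⟨⟨s(c i, c (i + 1)), hcedge i hi, Sym2.map_pair_eq ψ _ _⟩, ?_⟩
    intro hc
    rw [Set.mem_singleton_iff] at hc
    apply hedgene i hi hij
    apply hψeinj
    rw [Sym2.map_pair_eq, hψe₀]
    exact hc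
  -- the path u₀ … u_{k+1}, oriented to match c j, c (j+1)
  have hwex : ∃ w : ℕ → ℕ, w 0 = c j ∧ w (k + 1) = c (j + 1) ∧
      (∀ i, i < k + 1 → s(w i, w (i + 1)) ∈ pathE) ∧
      (∀ i, 1 ≤ i → i ≤ k → w i ∈ interiorVerts u) ∧
      (∀ i1, i1 ≤ k + 1 → ∀ i2, i2 ≤ k + 1 → w i1 = w i2 → i1 = i2) := by
    set uN : ℕ → ℕ :=
      fun i => u ⟨min i (k + 1), Nat.lt_succ_of_le (min_le_right _ _)⟩ with huNdef
    have huNval : ∀ (i : ℕ) (h : i < k + 2), i ≤ k + 1 → uN i = u ⟨i, h⟩ := by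
      intro i h hi
      simp only [huNdef]
      exact congrArg u (Fin.ext (by show min i (k + 1) = i; omega))
    have huNedge : ∀ i, i < k + 1 → s(uN i, uN (i + 1)) ∈ pathE := by
      intro i hi
      refine ⟨⟨i, hi⟩, ?_⟩
      rw [huNval i (by omega) (by omega), huNval (i + 1) (by omega) (by omega)]
      have e1 : (⟨i, by omega⟩ : Fin (k + 2)) = Fin.castSucc ⟨i, hi⟩ :=
        Fin.ext (by simp)
      have e2 : (⟨i + 1, by omega⟩ : Fin (k + 2)) = Fin.succ ⟨i, hi⟩ :=
        Fin.ext (by simp [Fin.val_succ])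
      rw [e1, e2]
    have huNint : ∀ i, 1 ≤ i → i ≤ k → uN i ∈ interiorVerts u := by
      intro i h1 h2
      refine ⟨⟨i, by omega⟩, h1, h2, (huNval i (by omega) (by omega))⟩
    have huNinj : ∀ i1, i1 ≤ k + 1 → ∀ i2, i2 ≤ k + 1 → uN i1 = uN i2 → i1 = i2 := by
      intro i1 h1 i2 h2 he
      rw [huNval i1 (by omega) h1, huNval i2 (by omega) h2] at he
      have := congrArg Fin.val (hu he)
      simpa using this
    rcases horient with ⟨h1, h2⟩ | ⟨h1, h2⟩
    · refine ⟨uN, ?_, ?_, huNedge, huNint, huNinj⟩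
      · rw [huNval 0 (by omega) (by omega), ← h1]
        exact congrArg u (Fin.ext (by simp))
      · rw [huNval (k + 1) (by omega) (by omega), ← h2]
        exact congrArg u (Fin.ext (by simp [Fin.last]))
    · refine ⟨fun i => uN (k + 1 - i), ?_, ?_, ?_, ?_, ?_⟩
      · show uN (k + 1 - 0) = c j
        rw [Nat.sub_zero, huNval (k + 1) (by omega) (by omega), ← h2]
        exact congrArg u (Fin.ext (by simp [Fin.last]))
      · show uN (k + 1 - (k + 1)) = c (j + 1)
        rw [Nat.sub_self, huNval 0 (by omega) (by omega), ← h1]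
        exact congrArg u (Fin.ext (by simp))
      · intro i hi
        show s(uN (k + 1 - i), uN (k + 1 - (i + 1))) ∈ pathE
        have e1 : k + 1 - (i + 1) = k - i := by omega
        have e2 : k + 1 - i = (k - i) + 1 := by omega
        rw [e1, e2, Sym2.eq_swap]
        exact huNedge (k - i) (by omega)
      · intro i h1i h2i
        show uN (k + 1 - i) ∈ interiorVerts u
        exact huNint (k + 1 - i) (by omega) (by omega)
      · intro i1 hi1 i2 hi2 he
        have := huNinj (k + 1 - i1) (by omega) (k + 1 - i2) (by omega) he
        omega
  obtain ⟨w, hw0, hwl, hwe, hwint, hwinj⟩ := hwex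
  have hcjV0 : ψ (c j) = c j ∧ ψ (c (j + 1)) = c (j + 1) := by
    rcases horient with ⟨h1, h2⟩ | ⟨h1, h2⟩
    · exact ⟨by rw [← h1]; exact hψfix _ hu0V0, by rw [← h2]; exact hψfix _ hulV0⟩
    · exact ⟨by rw [← h2]; exact hψfix _ hulV0, by rw [← h1]; exact hψfix _ hu0V0⟩
  -- the real blue path
  set g : ℕ → ℕ :=
    fun i => if i ≤ j then ψ (c i) else if i ≤ j + k then w (i - j) else ψ (c (i - k)) with hgdef
  have hgval1 : ∀ i, i ≤ j → g i = ψ (c i) := by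
    intro i hi; simp only [hgdef]; rw [if_pos hi]
  have hgval2 : ∀ i, j < i → i ≤ j + k → g i = w (i - j) := by
    intro i h1 h2; simp only [hgdef]; rw [if_neg (by omega), if_pos h2]
  have hgval3 : ∀ i, j + k < i → g i = ψ (c (i - k)) := by
    intro i h1; simp only [hgdef]; rw [if_neg (by omega), if_neg (by omega)]
  have hgedge : ∀ i, i + 1 < n → s(g i, g (i + 1)) ∈ blueSet Bl (mapH s) := by
    intro i hi
    by_cases h1 : i + 1 ≤ j
    · rw [hgval1 i (by omega), hgval1 (i + 1) h1]
      exact hDsub i (by omega) (by omega)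
    · by_cases h2 : i = j
      · rw [hgval1 i (by omega), hgval2 (i + 1) (by omega) (by omega)]
        have e1 : i + 1 - j = 1 := by omega
        rw [e1, h2, hcjV0.1, ← hw0, hblueEq]
        exact Or.inl (hwe 0 (by omega))
      · by_cases h3 : i + 1 ≤ j + k
        · rw [hgval2 i (by omega) (by omega), hgval2 (i + 1) (by omega) h3]
          have e1 : i + 1 - j = (i - j) + 1 := by omega
          rw [e1, hblueEq]
          exact Or.inl (hwe (i - j) (by omega))
        · by_cases h4 : i ≤ j + k
          · rw [hgval2 i (by omega) h4, hgval3 (i + 1) (by omega)]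
            have e1 : i + 1 - k = j + 1 := by omega
            have e2 : i - j = k := by omega
            rw [e1, e2, hcjV0.2, ← hwl, hblueEq]
            exact Or.inl (hwe k (by omega))
          · rw [hgval3 i (by omega), hgval3 (i + 1) (by omega)]
            have e1 : i + 1 - k = (i - k) + 1 := by omega
            rw [e1]
            exact hDsub (i - k) (by omega) (by omega)
  have hgval : ∀ i, (i ≤ j ∧ g i = ψ (c i)) ∨ (j < i ∧ i ≤ j + k ∧ g i = w (i - j)) ∨
      (j + k < i ∧ g i = ψ (c (i - k))) := by
    intro i
    by_cases h1 : i ≤ j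
    · exact Or.inl ⟨h1, hgval1 i h1⟩
    · by_cases h2 : i ≤ j + k
      · exact Or.inr (Or.inl ⟨by omega, h2, hgval2 i (by omega) h2⟩)
      · exact Or.inr (Or.inr ⟨by omega, hgval3 i (by omega)⟩)
  have hwψ : ∀ i, j < i → i ≤ j + k → ∀ x, ψ x ≠ w (i - j) := by
    intro i hi1 hi2 x
    exact hintne _ (hwint (i - j) (by omega) (by omega)) x
  have hginj : ∀ i1, i1 < n → ∀ i2, i2 < n → g i1 = g i2 → i1 = i2 := by
    intro i1 hi1 i2 hi2 he
    rcases hgval i1 with ⟨ha1, hv1⟩ | ⟨ha1, hb1, hv1⟩ | ⟨ha1, hv1⟩ <;>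
      rcases hgval i2 with ⟨ha2, hv2⟩ | ⟨ha2, hb2, hv2⟩ | ⟨ha2, hv2⟩ <;>
        rw [hv1, hv2] at he
    · have := hcinj i1 (by omega) i2 (by omega) (hψinj he)
      omega
    · exact absurd he (hwψ i2 ha2 hb2 _)
    · have := hcinj i1 (by omega) (i2 - k) (by omega) (hψinj he)
      omega
    · exact absurd he.symm (hwψ i1 ha1 hb1 _)
    · have := hwinj (i1 - j) (by omega) (i2 - j) (by omega) he
      omega
    · exact absurd he.symm (hwψ i1 ha1 hb1 _)
    · have := hcinj (i1 - k) (by omega) i2 (by omega) (hψinj he)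
      omega
    · exact absurd he (hwψ i2 ha2 hb2 _)
    · have := hcinj (i1 - k) (by omega) (i2 - k) (by omega) (hψinj he)
      omega
  refine ⟨t', le_trans ht'le harith2, ?_, ?_⟩
  · rw [hreal]
    exact hcardreal
  · rw [hreal]
    exact hasCopy_path_of_seq g hginj hgedge

end OnlineRamsey
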